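/- For each purely improper d ∈ ℝ^m_{pi}⟨⟨X⟩⟩, the fixed point equation e = d^{⧢−1} ∘̄ δ_e has a unique solution e =: d^{∘−1} in ℝ^m⟨⟨X⟩⟩ (which is purely improper), and δ_{d^{∘−1}} is the two-sided inverse of δ_d in the monoid (δ ⧢ ℝ^m⟨⟨X⟩⟩, ∘). Consequently δ ⧢ ℝ^m_{pi}⟨⟨X⟩⟩ forms a group under the multiplicative composition product with identity δ_1. -/

import Mathlib

open scoped BigOperators

namespace FPS

/-- A (noncommutative) formal power series over alphabet `X` is a map from words to `ℝ`. -/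
abbrev Series (X : Type*) := List X → ℝ

noncomputable section

variable {X : Type*} [DecidableEq X]

/-- The series `1·∅`. -/
def one : Series X := fun η => if η = [] then 1 else 0

/-- Cauchy (concatenation) product. -/
def cauchy (c d : Series X) : Series X := fun η =>
  ∑ i ∈ Finset.range (η.length + 1), c (η.take i) * d (η.drop i)

/-- Shuffle product. -/
def sh (c d : Series X) : List X → ℝ
  | [] => c [] * d []
  | x :: t => sh (fun w => c (x :: w)) d t + sh c (fun w => d (x :: w)) t

/-- Cauchy powers. -/
def cpow (c : Series X) : ℕ → Series X
  | 0 => one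
  | k + 1 => cauchy c (cpow c k)

/-- Shuffle powers. -/
def shpow (c : Series X) : ℕ → Series X
  | 0 => one
  | k + 1 => sh c (shpow c k)

/-- The proper series `1 - s/(s,∅)` entering the inverse formulas (negated proper part of `s/(s,∅)`). -/
def sprime (s : Series X) : Series X := fun w => if w = [] then 0 else - (s w / s [])

/-- Cauchy inverse `(s,∅)⁻¹ Σ_k (s')^k` of a purely improper series. -/
def cInv (s : Series X) : Series X := fun η =>
  (s [])⁻¹ * ∑ k ∈ Finset.range (η.length + 1), cpow (sprime s) k η

/-- Shuffle inverse `(s,∅)⁻¹ Σ_k (s')^{⧢k}` of a purely improper series. -/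
def shInv (s : Series X) : Series X := fun η =>
  (s [])⁻¹ * ∑ k ∈ Finset.range (η.length + 1), shpow (sprime s) k η

/-- The order: minimal length of a word in the support (`⊤` for the zero series). -/
def ord (c : Series X) : ℕ∞ := sInf ((fun η : List X => (η.length : ℕ∞)) '' {η | c η ≠ 0})

/-- `σ^n` with `σ^⊤ = 0`. -/
def powE (σ : ℝ) : ℕ∞ → ℝ := fun n => if n = ⊤ then 0 else σ ^ n.toNat

/-- The ultrametric `κ(c,d) = σ^{ord(c-d)}`. -/
def kappa (σ : ℝ) (c d : Series X) : ℝ := powE σ (ord (c - d))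

/-- Order of a vector of series (minimum over components). -/
def ordV {n : ℕ} (c : Fin n → Series X) : ℕ∞ := ⨅ i, ord (c i)

/-- Ultrametric on vectors of series. -/
def kappaV (σ : ℝ) {n : ℕ} (c d : Fin n → Series X) : ℝ := powE σ (ordV (c - d))

/-- Proper part `c - (c,∅)∅`. -/
def properPart (c : Series X) : Series X := fun w => if w = [] then 0 else c w

/-- Left concatenation by a letter: `x·s`. -/
def leftc (x : X) (s : Series X) : Series X := fun η =>
  match η with
  | [] => 0
  | y :: t => if y = x then s t else 0

end

noncomputable section

/-- `φ̄_d(η)` : the algebra homomorphism defining the multiplicative mixed composition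
product, with `φ̄_d(x_0)(w) = x_0 w` and `φ̄_d(x_i)(w) = x_i (d_i ⧢ w)`. -/
def phiWord {m : ℕ} (d : Fin m → Series (Fin (m + 1))) :
    List (Fin (m + 1)) → Series (Fin (m + 1)) → Series (Fin (m + 1))
  | [], w => w
  | i :: t, w =>
      Fin.cases (leftc 0 (phiWord d t w)) (fun j => leftc j.succ (sh (d j) (phiWord d t w))) i

/-- Multiplicative mixed composition product `c ∘̄ δ_d = Σ_η (c,η) φ̄_d(η)(1)`. -/
def mix {m : ℕ} (c : Series (Fin (m + 1))) (d : Fin m → Series (Fin (m + 1))) :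
    Series (Fin (m + 1)) := fun η =>
  ∑ k ∈ Finset.range (η.length + 1),
    ∑ v : List.Vector (Fin (m + 1)) k, c v.toList * phiWord d v.toList one η

/-- `ψ_e(η)` : the algebra homomorphism defining the composition product, with
`ψ_e(x'_i)(w) = x_0 (e_i ⧢ w)`, `e_0 = 1∅`. -/
def psiWord {ℓ m : ℕ} (e : Fin ℓ → Series (Fin (m + 1))) :
    List (Fin (ℓ + 1)) → Series (Fin (m + 1)) → Series (Fin (m + 1))
  | [], w => w
  | i :: t, w => leftc 0 (sh (Fin.cases one e i) (psiWord e t w))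

/-- Composition product `c ∘ e = Σ_η (c,η) ψ_e(η)(1)`. -/
def comp {ℓ m : ℕ} (c : Series (Fin (ℓ + 1))) (e : Fin ℓ → Series (Fin (m + 1))) :
    Series (Fin (m + 1)) := fun η =>
  ∑ k ∈ Finset.range (η.length + 1),
    ∑ v : List.Vector (Fin (ℓ + 1)) k, c v.toList * psiWord e v.toList one η

/-- The multiplicative composition product on `δ`-series:
`δ_c ∘ δ_d = δ_{d ⧢ (c ∘̄ δ_d)}`, expressed on the underlying series. -/
def star {m : ℕ} (c d : Fin m → Series (Fin (m + 1))) : Fin m → Series (Fin (m + 1)) :=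
  fun i => sh (d i) (mix (c i) d)

/-- The all-ones series vector (generating series of the identity `δ_1`). -/
def oneV {X : Type*} [DecidableEq X] (m : ℕ) : Fin m → Series X := fun _ => one

open Classical in
/-- The inverse `d^{∘-1}` in the multiplicative dynamic output feedback group: the unique
solution of `e = d^{⧢-1} ∘̄ δ_e`. -/
def dynInv {m : ℕ} (d : Fin m → Series (Fin (m + 1))) : Fin m → Series (Fin (m + 1)) :=
  if h : ∃ e : Fin m → Series (Fin (m + 1)), e = fun i => mix (shInv (d i)) e then h.choose
  else oneV m

/-- Shuffle power of a family: `c^{⧢n} = c_1^{⧢n_1} ⧢ ⋯ ⧢ c_ℓ^{⧢n_ℓ}`. -/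
def shFam {X : Type*} [DecidableEq X] {ℓ : ℕ} (c : Fin ℓ → Series X) (n : Fin ℓ →₀ ℕ) :
    Series X :=
  (List.finRange ℓ).foldr (fun i acc => sh (shpow (c i) (n i)) acc) one

/-- Wiener-Fliess composition product `d ∘̂ c = Σ_{η∈X̃*} (d,η) c^{⧢η}` of a commutative
series `d` with a (proper) noncommutative series vector `c`. -/
def wf {X : Type*} [DecidableEq X] {ℓ : ℕ} (d : MvPowerSeries (Fin ℓ) ℝ)
    (c : Fin ℓ → Series X) : Series X := fun η =>
  ∑ n ∈ Finset.Iic (Finsupp.equivFunOnFinite.symm fun _ : Fin ℓ => η.length),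
    MvPowerSeries.coeff n d * shFam c n η

end
set_option linter.unusedSectionVars false

section Aux
variable {X : Type*} [DecidableEq X]

lemma sh_nil (a b : Series X) : sh a b [] = a [] * b [] := rfl

lemma sh_cons (a b : Series X) (x : X) (t : List X) :
    sh a b (x :: t) = sh (fun w => a (x :: w)) b t + sh a (fun w => b (x :: w)) t := rfl

lemma sh_add_left (a a' b : Series X) : ∀ η,
    sh (fun w => a w + a' w) b η = sh a b η + sh a' b η := by
  intro η
  induction η generalizing a a' b with
  | nil => simp only [sh_nil]; ring
  | cons x t ih =>
    simp only [sh_cons]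
    rw [ih (fun w => a (x :: w)) (fun w => a' (x :: w)) b, ih a a' (fun w => b (x :: w))]
    ring

lemma sh_add_right (a b b' : Series X) : ∀ η,
    sh a (fun w => b w + b' w) η = sh a b η + sh a b' η := by
  intro η
  induction η generalizing a b b' with
  | nil => simp only [sh_nil]; ring
  | cons x t ih =>
    simp only [sh_cons]
    rw [ih (fun w => a (x :: w)) b b', ih a (fun w => b (x :: w)) (fun w => b' (x :: w))]
    ring

lemma sh_zero_left (b : Series X) : ∀ η, sh (fun _ => (0:ℝ)) b η = 0 := by
  intro η
  induction η generalizing b with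
  | nil => simp [sh_nil]
  | cons x t ih => simp only [sh_cons]; rw [ih b, ih (fun w => b (x :: w))]; ring

lemma sh_zero_right (a : Series X) : ∀ η, sh a (fun _ => (0:ℝ)) η = 0 := by
  intro η
  induction η generalizing a with
  | nil => simp [sh_nil]
  | cons x t ih => simp only [sh_cons]; rw [ih a, ih (fun w => a (x :: w))]; ring

lemma sh_smul_left (r : ℝ) (a b : Series X) : ∀ η,
    sh (fun w => r * a w) b η = r * sh a b η := by
  intro η
  induction η generalizing a b with
  | nil => simp only [sh_nil]; ring
  | cons x t ih =>
    simp only [sh_cons]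
    rw [ih (fun w => a (x :: w)) b, ih a (fun w => b (x :: w))]; ring

lemma sh_smul_right (r : ℝ) (a b : Series X) : ∀ η,
    sh a (fun w => r * b w) η = r * sh a b η := by
  intro η
  induction η generalizing a b with
  | nil => simp only [sh_nil]; ring
  | cons x t ih =>
    simp only [sh_cons]
    rw [ih (fun w => a (x :: w)) b, ih a (fun w => b (x :: w))]; ring

lemma sh_one_left (b : Series X) : ∀ η, sh one b η = b η := by
  intro η
  induction η generalizing b with
  | nil => simp [sh_nil, one]
  | cons x t ih =>
    simp only [sh_cons]
    have h0 : sh (fun w => one (x :: w)) b t = 0 := by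
      rw [show (fun w : List X => one (x :: w)) = (fun _ : List X => (0:ℝ)) by
        funext w; simp [one]]
      exact sh_zero_left b t
    rw [h0, ih (fun w => b (x :: w))]; ring

lemma sh_comm (a b : Series X) : ∀ η, sh a b η = sh b a η := by
  intro η
  induction η generalizing a b with
  | nil => simp only [sh_nil]; ring
  | cons x t ih =>
    simp only [sh_cons]
    rw [ih (fun w => a (x :: w)) b, ih a (fun w => b (x :: w))]; ring

lemma sh_one_right (a : Series X) : ∀ η, sh a one η = a η := by
  intro η; rw [sh_comm, sh_one_left]

lemma sh_assoc (a b c : Series X) : ∀ η, sh (sh a b) c η = sh a (sh b c) η := by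
  intro η
  induction η generalizing a b c with
  | nil => simp only [sh_nil]; ring
  | cons x t ih =>
    simp only [sh_cons]
    rw [sh_add_left (sh (fun w => a (x :: w)) b) (sh a (fun w => b (x :: w))) c t,
        sh_add_right a (sh (fun w => b (x :: w)) c) (sh b (fun w => c (x :: w))) t,
        ih (fun u => a (x :: u)) b c, ih a (fun u => b (x :: u)) c,
        ih a b (fun u => c (x :: u))]
    ring

lemma sh_congr {a a' b b' : Series X} : ∀ η,
    (∀ w : List X, w.length ≤ η.length → a w = a' w) →
    (∀ w : List X, w.length ≤ η.length → b w = b' w) →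
    sh a b η = sh a' b' η := by
  intro η
  induction η generalizing a a' b b' with
  | nil =>
    intro ha hb
    simp only [sh_nil, ha [] (by simp), hb [] (by simp)]
  | cons x t ih =>
    intro ha hb
    simp only [sh_cons]
    rw [ih (fun w hw => ha (x :: w) (by simpa using Nat.succ_le_succ hw))
          (fun w hw => hb w (le_trans hw (Nat.le_succ _))),
        ih (fun w hw => ha w (le_trans hw (Nat.le_succ _)))
          (fun w hw => hb (x :: w) (by simpa using Nat.succ_le_succ hw))]

lemma sh_sum_right {ι : Type*} (S : Finset ι) (a : Series X) (f : ι → Series X) : ∀ η,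
    sh a (fun w => ∑ s ∈ S, f s w) η = ∑ s ∈ S, sh a (f s) η := by
  classical
  intro η
  induction S using Finset.induction with
  | empty => simpa using sh_zero_right a η
  | insert _ _ hnot ih =>
    rename_i s S
    rw [Finset.sum_insert hnot, ← ih]
    rw [show (fun w => ∑ t ∈ insert s S, f t w) = (fun w => f s w + ∑ t ∈ S, f t w) by
      funext w; rw [Finset.sum_insert hnot]]
    rw [sh_add_right]

/-- Vanishing of shuffle products of series of positive order. -/
lemma sh_vanish {p q : Series X} : ∀ (η : List X) (ka kb : ℕ),
    (∀ w : List X, w.length < ka → p w = 0) →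
    (∀ w : List X, w.length < kb → q w = 0) →
    η.length < ka + kb → sh p q η = 0 := by
  intro η
  induction η generalizing p q with
  | nil =>
    intro ka kb hp hq hlen
    rw [sh_nil]
    rcases Nat.lt_or_ge 0 ka with h | h
    · rw [hp [] (by simpa using h)]; ring
    · rw [hq [] (by omega)]; ring
  | cons x t ih =>
    intro ka kb hp hq hlen
    rw [sh_cons]
    rw [ih (ka - 1) kb (fun w hw => hp (x :: w) (by simp; omega))
        (fun w hw => hq w hw) (by simp at hlen ⊢; omega),
      ih ka (kb - 1) (fun w hw => hp w hw)
        (fun w hw => hq (x :: w) (by simp; omega)) (by simp at hlen ⊢; omega)]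
    ring
lemma sprime_nil (s : Series X) : sprime s [] = 0 := by simp [sprime]

lemma shpow_vanish {p : Series X} (hp : p [] = 0) :
    ∀ (k : ℕ) (η : List X), η.length < k → shpow p k η = 0 := by
  intro k
  induction k with
  | zero => intro η h; omega
  | succ k ih =>
    intro η h
    show sh p (shpow p k) η = 0
    exact sh_vanish η 1 k
      (fun w hw => by cases w with
        | nil => exact hp
        | cons y u => simp at hw)
      (fun w hw => ih w hw) (by omega)

lemma sh_shInv {s : Series X} (hs : s [] ≠ 0) : ∀ η, sh s (shInv s) η = one η := by
  intro η
  set n := η.length with hn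
  set p := sprime s with hp
  set G : Series X := fun w => ∑ k ∈ Finset.range (n + 1), shpow p k w with hG
  have hagree : ∀ w : List X, w.length ≤ n → shInv s w = (s [])⁻¹ * G w := by
    intro w hw
    show (s [])⁻¹ * ∑ k ∈ Finset.range (w.length + 1), shpow p k w = _
    rw [hG]
    congr 1
    refine Finset.sum_subset ?_ ?_
    · intro k hk; simp at hk ⊢; omega
    · intro k _ hk
      simp only [Finset.mem_range, not_lt] at hk
      exact shpow_vanish (sprime_nil s) k w (by omega)
  have step2 : sh s (shInv s) η = (s [])⁻¹ * sh s G η := by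
    rw [sh_congr η (fun w _ => rfl) (fun w hw => hagree w (by omega)),
      sh_smul_right]
  have hs_decomp : s = fun w => s [] * one w + (-(s [])) * p w := by
    funext w
    cases w with
    | nil => simp [one, hp, sprime_nil]
    | cons x t =>
      simp only [one, hp, sprime, if_neg (List.cons_ne_nil x t)]
      field_simp
      ring
  have step4 : sh s G η = s [] * G η + (-(s [])) * sh p G η := by
    conv_lhs => rw [hs_decomp]
    rw [show sh (fun w => s [] * one w + (-(s [])) * p w) G η
        = sh (fun w => s [] * one w) G η + sh (fun w => (-(s [])) * p w) G η from
      sh_add_left _ _ _ η]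
    rw [sh_smul_left, sh_smul_left, sh_one_left]
  have step5 : sh p G η = G η - one η := by
    have h1 : sh p G η = ∑ k ∈ Finset.range (n+1), shpow p (k+1) η := by
      rw [show sh p G η = ∑ k ∈ Finset.range (n+1), sh p (shpow p k) η from
        sh_sum_right _ _ _ η]
      rfl
    have h2 := Finset.sum_range_succ' (fun k => shpow p k η) (n+1)
    have h3 := Finset.sum_range_succ (fun k => shpow p k η) (n+1)
    have h4 : shpow p (n+1) η = 0 := shpow_vanish (sprime_nil s) (n+1) η (by omega)
    have h5 : shpow p 0 η = one η := rfl
    have hGη : G η = ∑ k ∈ Finset.range (n+1), shpow p k η := rfl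
    rw [h1, hGη]
    rw [h4] at h3
    rw [h5] at h2
    linarith [h2, h3]
  rw [step2, step4, step5]
  field_simp
  ring
end Aux
instance vec0Unique {α : Type*} : Unique (List.Vector α 0) :=
  ⟨⟨List.Vector.nil⟩, fun v => List.Vector.eq v List.Vector.nil
    (List.length_eq_zero_iff.mp (List.Vector.toList_length v))⟩

def vecEquiv (α : Type*) (k : ℕ) : α × List.Vector α k ≃ List.Vector α (k+1) where
  toFun p := p.1 ::ᵥ p.2
  invFun v := (v.head, v.tail)
  left_inv p := by simp
  right_inv v := by simp

lemma sum_vec_succ {α : Type*} [Fintype α] (k : ℕ) (f : List.Vector α (k+1) → ℝ) :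
    ∑ v : List.Vector α (k+1), f v = ∑ i : α, ∑ t : List.Vector α k, f (i ::ᵥ t) := by
  rw [← Equiv.sum_comp (vecEquiv α k) f, Fintype.sum_prod_type]
  rfl

section MixAux

variable {m : ℕ}

/-- Left shift of a series by a letter. -/
def shiftc {X : Type*} (x : X) (c : Series X) : Series X := fun w => c (x :: w)

lemma phi_cons_zero (e : Fin m → Series (Fin (m+1))) (t : List (Fin (m+1)))
    (u : Series (Fin (m+1))) :
    phiWord e (0 :: t) u = leftc 0 (phiWord e t u) := by
  simp [phiWord]

lemma phi_cons_succ (e : Fin m → Series (Fin (m+1))) (j : Fin m) (t : List (Fin (m+1)))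
    (u : Series (Fin (m+1))) :
    phiWord e (j.succ :: t) u = leftc j.succ (sh (e j) (phiWord e t u)) := by
  simp [phiWord]

lemma leftc_nil {X : Type*} [DecidableEq X] (x : X) (s : Series X) : leftc x s [] = 0 := rfl

lemma leftc_cons {X : Type*} [DecidableEq X] (x y : X) (s : Series X) (t : List X) :
    leftc x s (y :: t) = if y = x then s t else 0 := rfl

lemma phi_vanish (e : Fin m → Series (Fin (m+1))) :
    ∀ (v η : List (Fin (m+1))), η.length < v.length → phiWord e v one η = 0 := by
  intro v
  induction v with
  | nil => intro η h; simp at h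
  | cons i t ih =>
    intro η h
    induction i using Fin.cases with
    | zero =>
      rw [phi_cons_zero]
      cases η with
      | nil => rfl
      | cons x τ =>
        rw [leftc_cons]
        split
        · exact ih τ (by simpa using h)
        · rfl
    | succ j =>
      rw [phi_cons_succ]
      cases η with
      | nil => rfl
      | cons x τ =>
        rw [leftc_cons]
        split
        · exact sh_vanish τ 0 t.length (fun w hw => by omega)
            (fun w hw => ih w hw) (by simpa using h)
        · rfl

lemma mix_def (c : Series (Fin (m+1))) (e : Fin m → Series (Fin (m+1))) (η : List (Fin (m+1))) :
    mix c e η = ∑ k ∈ Finset.range (η.length + 1),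
      ∑ v : List.Vector (Fin (m+1)) k, c v.toList * phiWord e v.toList one η := rfl

lemma mix_eq_sum (c : Series (Fin (m+1))) (e : Fin m → Series (Fin (m+1)))
    (η : List (Fin (m+1))) (N : ℕ) (hN : η.length < N) :
    mix c e η = ∑ k ∈ Finset.range N,
      ∑ v : List.Vector (Fin (m+1)) k, c v.toList * phiWord e v.toList one η := by
  rw [mix_def]
  refine Finset.sum_subset ?_ ?_
  · intro k hk; simp at hk ⊢; omega
  · intro k _ hk
    simp only [Finset.mem_range, not_lt] at hk
    refine Finset.sum_eq_zero fun v _ => ?_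
    rw [phi_vanish e v.toList η (by rw [List.Vector.toList_length]; omega)]
    ring

lemma mix_nil (c : Series (Fin (m+1))) (e : Fin m → Series (Fin (m+1))) :
    mix c e [] = c [] := by
  rw [mix_def]
  simp only [List.length_nil, zero_add, Finset.sum_range_one]
  rw [Fintype.sum_unique]
  show c (List.Vector.nil).toList * one [] = c []
  simp [one, List.Vector.toList_nil]

end MixAux
section MixAux2
variable {m : ℕ}

lemma mix_cons_zero (c : Series (Fin (m+1))) (e : Fin m → Series (Fin (m+1)))
    (τ : List (Fin (m+1))) :
    mix c e ((0 : Fin (m+1)) :: τ) = mix (shiftc 0 c) e τ := by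
  rw [mix_def]
  rw [show ((0 : Fin (m+1)) :: τ).length + 1 = (τ.length + 1) + 1 by simp]
  rw [Finset.sum_range_succ' (fun k => ∑ v : List.Vector (Fin (m+1)) k,
    c v.toList * phiWord e v.toList one ((0 : Fin (m+1)) :: τ)) (τ.length + 1)]
  have h0 : (∑ v : List.Vector (Fin (m+1)) 0,
      c v.toList * phiWord e v.toList one ((0 : Fin (m+1)) :: τ)) = 0 := by
    rw [Fintype.sum_unique]
    show c (List.Vector.nil).toList * one ((0 : Fin (m+1)) :: τ) = 0
    simp [one]
  rw [h0, add_zero, mix_def]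
  refine Finset.sum_congr rfl fun k _ => ?_
  rw [sum_vec_succ k]
  rw [Fin.sum_univ_succ]
  have hsucc : ∀ j : Fin m, (∑ t : List.Vector (Fin (m+1)) k,
      c ((j.succ ::ᵥ t)).toList * phiWord e ((j.succ ::ᵥ t)).toList one ((0 : Fin (m+1)) :: τ)) = 0 := by
    intro j
    refine Finset.sum_eq_zero fun t _ => ?_
    rw [List.Vector.toList_cons, phi_cons_succ, leftc_cons,
      if_neg (Fin.succ_ne_zero j).symm]
    ring
  rw [Finset.sum_congr rfl (fun j _ => hsucc j), Finset.sum_const, smul_zero, add_zero]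
  refine Finset.sum_congr rfl fun t _ => ?_
  rw [List.Vector.toList_cons, phi_cons_zero, leftc_cons, if_pos rfl]
  rfl

lemma mix_cons_succ (c : Series (Fin (m+1))) (e : Fin m → Series (Fin (m+1)))
    (j₀ : Fin m) (τ : List (Fin (m+1))) :
    mix c e (j₀.succ :: τ) = sh (e j₀) (mix (shiftc j₀.succ c) e) τ := by
  rw [mix_def]
  rw [show (j₀.succ :: τ).length + 1 = (τ.length + 1) + 1 by simp]
  rw [Finset.sum_range_succ' (fun k => ∑ v : List.Vector (Fin (m+1)) k,
    c v.toList * phiWord e v.toList one (j₀.succ :: τ)) (τ.length + 1)]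
  have h0 : (∑ v : List.Vector (Fin (m+1)) 0,
      c v.toList * phiWord e v.toList one (j₀.succ :: τ)) = 0 := by
    rw [Fintype.sum_unique]
    show c (List.Vector.nil).toList * one (j₀.succ :: τ) = 0
    simp [one]
  rw [h0, add_zero]
  -- LHS reduction to the single head j₀
  have hL : ∀ k, (∑ v : List.Vector (Fin (m+1)) (k+1),
      c v.toList * phiWord e v.toList one (j₀.succ :: τ))
      = ∑ t : List.Vector (Fin (m+1)) k,
          c (j₀.succ :: t.toList) * sh (e j₀) (phiWord e t.toList one) τ := by
    intro k
    rw [sum_vec_succ k, Fin.sum_univ_succ]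
    have hz : (∑ t : List.Vector (Fin (m+1)) k,
        c (((0 : Fin (m+1)) ::ᵥ t)).toList * phiWord e (((0 : Fin (m+1)) ::ᵥ t)).toList one (j₀.succ :: τ)) = 0 := by
      refine Finset.sum_eq_zero fun t _ => ?_
      rw [List.Vector.toList_cons, phi_cons_zero, leftc_cons, if_neg (Fin.succ_ne_zero j₀)]
      ring
    rw [hz, zero_add]
    have hstep : ∀ j : Fin m, (∑ t : List.Vector (Fin (m+1)) k,
        c ((j.succ ::ᵥ t)).toList * phiWord e ((j.succ ::ᵥ t)).toList one (j₀.succ :: τ))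
        = if j₀ = j then ∑ t : List.Vector (Fin (m+1)) k,
            c (j.succ :: t.toList) * sh (e j) (phiWord e t.toList one) τ else 0 := by
      intro j
      by_cases hj : j₀ = j
      · subst hj
        rw [if_pos rfl]
        refine Finset.sum_congr rfl fun t _ => ?_
        rw [List.Vector.toList_cons, phi_cons_succ, leftc_cons, if_pos rfl]
      · rw [if_neg hj]
        refine Finset.sum_eq_zero fun t _ => ?_
        rw [List.Vector.toList_cons, phi_cons_succ, leftc_cons,
          if_neg (fun h => hj (Fin.succ_inj.mp h))]
        ring
    rw [Finset.sum_congr rfl (fun j _ => hstep j), Finset.sum_ite_eq]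
    simp
  rw [Finset.sum_congr rfl (fun k _ => hL k)]
  -- RHS
  have hR : sh (e j₀) (mix (shiftc j₀.succ c) e) τ
      = sh (e j₀) (fun w => ∑ k ∈ Finset.range (τ.length + 1),
          ∑ t : List.Vector (Fin (m+1)) k,
            c (j₀.succ :: t.toList) * phiWord e t.toList one w) τ := by
    refine sh_congr τ (fun w _ => rfl) (fun w hw => ?_)
    rw [mix_eq_sum (shiftc j₀.succ c) e w (τ.length + 1) (by omega)]
    rfl
  rw [hR, sh_sum_right]
  refine Finset.sum_congr rfl fun k _ => ?_
  rw [sh_sum_right]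
  refine Finset.sum_congr rfl fun t _ => ?_
  rw [sh_smul_right]

end MixAux2
section MixAlg
variable {m : ℕ}

lemma mix_add_left (a b : Series (Fin (m+1))) (e : Fin m → Series (Fin (m+1)))
    (η : List (Fin (m+1))) :
    mix (fun w => a w + b w) e η = mix a e η + mix b e η := by
  simp [mix_def, add_mul, Finset.sum_add_distrib]

lemma mix_zero (e : Fin m → Series (Fin (m+1))) (η : List (Fin (m+1))) :
    mix (fun _ => (0:ℝ)) e η = 0 := by
  simp [mix_def]

lemma mix_congr :
    ∀ (n : ℕ) (g g' : Fin m → Series (Fin (m+1))) (η : List (Fin (m+1))), η.length ≤ n →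
    (∀ i w, w.length < η.length → g i w = g' i w) →
    ∀ c : Series (Fin (m+1)), mix c g η = mix c g' η := by
  intro n
  induction n with
  | zero =>
    intro g g' η hη _ c
    have : η = [] := List.length_eq_zero_iff.mp (by omega)
    subst this
    rw [mix_nil, mix_nil]
  | succ n ih =>
    intro g g' η hη hgg c
    cases η with
    | nil => rw [mix_nil, mix_nil]
    | cons x τ =>
      have hτ : τ.length ≤ n := by simp at hη; omega
      induction x using Fin.cases with
      | zero =>
        rw [mix_cons_zero, mix_cons_zero]
        exact ih g g' τ hτ (fun i w hw => hgg i w (by simp; omega)) (shiftc 0 c)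
      | succ j =>
        rw [mix_cons_succ, mix_cons_succ]
        refine sh_congr τ (fun w hw => hgg j w (by simp; omega)) (fun w hw => ?_)
        exact ih g g' w (by omega) (fun i w' hw' => hgg i w' (by simp; omega))
          (shiftc j.succ c)

lemma mix_congr' (g g' : Fin m → Series (Fin (m+1))) (η : List (Fin (m+1)))
    (h : ∀ i w, w.length < η.length → g i w = g' i w) (c : Series (Fin (m+1))) :
    mix c g η = mix c g' η :=
  mix_congr η.length g g' η le_rfl h c

lemma mix_one (e : Fin m → Series (Fin (m+1))) : ∀ η, mix one e η = one η := by
  intro η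
  induction η with
  | nil => rw [mix_nil]
  | cons x τ ih =>
    induction x using Fin.cases with
    | zero =>
      rw [mix_cons_zero]
      rw [show shiftc (0 : Fin (m+1)) one = (fun _ => (0:ℝ)) by
        funext w; simp [shiftc, one]]
      rw [mix_zero]
      simp [one]
    | succ j =>
      rw [mix_cons_succ]
      rw [show mix (shiftc j.succ one) e = (fun _ => (0:ℝ)) by
        funext w
        rw [show shiftc (Fin.succ j) one = (fun _ => (0:ℝ)) by
          funext w'; simp [shiftc, one, Fin.succ_ne_zero]]
        exact mix_zero e w]
      rw [sh_zero_right]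
      simp [one]

lemma mix_oneV (c : Series (Fin (m+1))) : ∀ η, mix c (oneV m) η = c η := by
  intro η
  induction η generalizing c with
  | nil => rw [mix_nil]
  | cons x τ ih =>
    induction x using Fin.cases with
    | zero => rw [mix_cons_zero, ih (shiftc 0 c)]; rfl
    | succ j =>
      rw [mix_cons_succ]
      rw [show oneV m j = one from rfl, sh_one_left, ih (shiftc j.succ c)]
      rfl

lemma mix_sh (e : Fin m → Series (Fin (m+1))) :
    ∀ (n : ℕ) (η : List (Fin (m+1))), η.length ≤ n → ∀ a b,
      mix (sh a b) e η = sh (mix a e) (mix b e) η := by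
  intro n
  induction n with
  | zero =>
    intro η hη a b
    have : η = [] := List.length_eq_zero_iff.mp (by omega)
    subst this
    simp only [mix_nil, sh_nil]
  | succ n ih =>
    intro η hη a b
    cases η with
    | nil => simp only [mix_nil, sh_nil]
    | cons x τ =>
      have hτ : τ.length ≤ n := by simp at hη; omega
      induction x using Fin.cases with
      | zero =>
        rw [mix_cons_zero, sh_cons]
        have hsplit : mix (shiftc (0 : Fin (m+1)) (sh a b)) e τ
            = mix (sh (shiftc 0 a) b) e τ + mix (sh a (shiftc 0 b)) e τ := by
          rw [show shiftc (0 : Fin (m+1)) (sh a b)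
            = fun w => sh (shiftc 0 a) b w + sh a (shiftc 0 b) w from rfl]
          exact mix_add_left _ _ e τ
        rw [hsplit, ih τ hτ (shiftc 0 a) b, ih τ hτ a (shiftc 0 b)]
        rw [show (fun w => mix a e ((0 : Fin (m+1)) :: w)) = mix (shiftc 0 a) e from
          funext fun w => mix_cons_zero a e w]
        rw [show (fun w => mix b e ((0 : Fin (m+1)) :: w)) = mix (shiftc 0 b) e from
          funext fun w => mix_cons_zero b e w]
      | succ j =>
        rw [mix_cons_succ, sh_cons]
        have hsplit : mix (shiftc j.succ (sh a b)) e
            = fun w => mix (sh (shiftc j.succ a) b) e w + mix (sh a (shiftc j.succ b)) e w := by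
          funext w
          rw [show shiftc j.succ (sh a b)
            = fun u => sh (shiftc j.succ a) b u + sh a (shiftc j.succ b) u from rfl]
          exact mix_add_left _ _ e w
        rw [hsplit, sh_add_right]
        have h1 : sh (e j) (mix (sh (shiftc j.succ a) b) e) τ
            = sh (sh (e j) (mix (shiftc j.succ a) e)) (mix b e) τ := by
          rw [sh_congr τ (fun w _ => rfl) (fun w hw => ih w (by omega) (shiftc j.succ a) b),
            ← sh_assoc]
        have h2 : sh (e j) (mix (sh a (shiftc j.succ b)) e) τ
            = sh (mix a e) (sh (e j) (mix (shiftc j.succ b) e)) τ := by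
          rw [sh_congr τ (fun w _ => rfl) (fun w hw => ih w (by omega) a (shiftc j.succ b))]
          rw [sh_congr τ (fun w _ => rfl)
            (fun w _ => sh_comm (mix a e) (mix (shiftc j.succ b) e) w)]
          rw [← sh_assoc, sh_comm]
        rw [h1, h2]
        rw [show (fun w => mix a e (j.succ :: w)) = sh (e j) (mix (shiftc j.succ a) e) from
          funext fun w => mix_cons_succ a e j w]
        rw [show (fun w => mix b e (j.succ :: w)) = sh (e j) (mix (shiftc j.succ b) e) from
          funext fun w => mix_cons_succ b e j w]

lemma mix_sh' (e : Fin m → Series (Fin (m+1))) (a b : Series (Fin (m+1)))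
    (η : List (Fin (m+1))) : mix (sh a b) e η = sh (mix a e) (mix b e) η :=
  mix_sh e η.length η le_rfl a b

lemma mix_mix (d g : Fin m → Series (Fin (m+1))) :
    ∀ (n : ℕ) (η : List (Fin (m+1))), η.length ≤ n → ∀ c,
      mix (mix c d) g η = mix c (star d g) η := by
  intro n
  induction n with
  | zero =>
    intro η hη c
    have : η = [] := List.length_eq_zero_iff.mp (by omega)
    subst this
    rw [mix_nil, mix_nil, mix_nil]
  | succ n ih =>
    intro η hη c
    cases η with
    | nil => rw [mix_nil, mix_nil, mix_nil]
    | cons x τ =>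
      have hτ : τ.length ≤ n := by simp at hη; omega
      induction x using Fin.cases with
      | zero =>
        rw [mix_cons_zero, mix_cons_zero]
        rw [show shiftc (0 : Fin (m+1)) (mix c d) = mix (shiftc 0 c) d from
          funext fun w => mix_cons_zero c d w]
        exact ih τ hτ (shiftc 0 c)
      | succ j =>
        rw [mix_cons_succ, mix_cons_succ]
        rw [show shiftc j.succ (mix c d) = sh (d j) (mix (shiftc j.succ c) d) from
          funext fun w => mix_cons_succ c d j w]
        rw [show mix (sh (d j) (mix (shiftc j.succ c) d)) g
            = fun w => sh (mix (d j) g) (mix (mix (shiftc j.succ c) d) g) w from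
          funext fun w => mix_sh' g (d j) (mix (shiftc j.succ c) d) w]
        rw [show star d g j = sh (g j) (mix (d j) g) from rfl, sh_assoc]
        refine sh_congr τ (fun w _ => rfl) (fun w hw => ?_)
        exact sh_congr w (fun w' _ => rfl)
          (fun w' hw' => ih w' (by omega) (shiftc j.succ c))

lemma mix_mix' (d g : Fin m → Series (Fin (m+1))) (c : Series (Fin (m+1)))
    (η : List (Fin (m+1))) : mix (mix c d) g η = mix c (star d g) η :=
  mix_mix d g η.length η le_rfl c

end MixAlg
section Fixed
variable {m : ℕ}

/-- Iterates of the fixed-point map `e ↦ d^{⧢-1} ∘̄ δ_e`. -/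
noncomputable def iterF (d : Fin m → Series (Fin (m+1))) : ℕ → (Fin m → Series (Fin (m+1)))
  | 0 => oneV m
  | n + 1 => fun i => mix (shInv (d i)) (iterF d n)

lemma iterF_stab (d : Fin m → Series (Fin (m+1))) :
    ∀ n (η : List (Fin (m+1))), η.length ≤ n → ∀ i,
      iterF d (n+1) i η = iterF d (n+2) i η := by
  intro n
  induction n with
  | zero =>
    intro η hη i
    show mix (shInv (d i)) (iterF d 0) η = mix (shInv (d i)) (iterF d 1) η
    exact mix_congr' _ _ η (fun i' w hw => absurd hw (by omega)) _
  | succ n ih =>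
    intro η hη i
    show mix (shInv (d i)) (iterF d (n+1)) η = mix (shInv (d i)) (iterF d (n+2)) η
    exact mix_congr' _ _ η (fun i' w hw => ih w (by omega) i') _

lemma iterF_stab' (d : Fin m → Series (Fin (m+1))) :
    ∀ (k n : ℕ) (η : List (Fin (m+1))), η.length ≤ n → ∀ i,
      iterF d (n+1) i η = iterF d (n+1+k) i η := by
  intro k
  induction k with
  | zero => intro n η hη i; rfl
  | succ k ih =>
    intro n η hη i
    rw [ih n η hη i]
    have := iterF_stab d (n+k) η (by omega) i
    rw [show n+1+k = n+k+1 by omega, this, show n+k+2 = n+1+(k+1) by omega]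

/-- The fixed point. -/
noncomputable def efix (d : Fin m → Series (Fin (m+1))) : Fin m → Series (Fin (m+1)) :=
  fun i η => iterF d (η.length + 1) i η

lemma efix_agree (d : Fin m → Series (Fin (m+1))) :
    ∀ (n : ℕ) (η : List (Fin (m+1))), η.length ≤ n → ∀ i,
      efix d i η = iterF d (n+1) i η := by
  intro n η hη i
  show iterF d (η.length + 1) i η = iterF d (n+1) i η
  have := iterF_stab' d (n - η.length) η.length η le_rfl i
  rwa [show η.length + 1 + (n - η.length) = n + 1 by omega] at this

lemma efix_fixed (d : Fin m → Series (Fin (m+1))) (i : Fin m) (η : List (Fin (m+1))) :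
    efix d i η = mix (shInv (d i)) (efix d) η := by
  have h1 : mix (shInv (d i)) (efix d) η = mix (shInv (d i)) (iterF d η.length) η := by
    refine mix_congr' _ _ η (fun i' w hw => ?_) _
    have := efix_agree d (η.length - 1) w (by omega) i'
    rwa [show η.length - 1 + 1 = η.length by omega] at this
  rw [h1]
  rfl

lemma fixed_unique (d : Fin m → Series (Fin (m+1))) (g g' : Fin m → Series (Fin (m+1)))
    (hg : ∀ i, g i = mix (shInv (d i)) g) (hg' : ∀ i, g' i = mix (shInv (d i)) g') :
    g = g' := by
  have claim : ∀ n (η : List (Fin (m+1))), η.length ≤ n → ∀ i, g i η = g' i η := by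
    intro n
    induction n with
    | zero =>
      intro η hη i
      rw [hg i, hg' i]
      exact mix_congr' _ _ η (fun i' w hw => absurd hw (by omega)) _
    | succ n ih =>
      intro η hη i
      rw [hg i, hg' i]
      exact mix_congr' _ _ η (fun i' w hw => ih w (by omega) i') _
  funext i η
  exact claim η.length η le_rfl i

end Fixed
/-- For purely improper `d`, the fixed point equation `e = d^{⧢-1} ∘̄ δ_e`
has a unique solution `d^{∘-1}`, which is purely improper and is the two-sided inverse of
`δ_d` in the monoid `(δ ⧢ ℝ^m⟨⟨X⟩⟩, ∘)`; moreover the purely improper series are closed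
under the monoid product, so `δ ⧢ ℝ^m_{pi}⟨⟨X⟩⟩` is a group. -/
theorem mult_dyn_feedback_group (m : ℕ) (d : Fin m → Series (Fin (m + 1)))
    (hd : ∀ i, d i [] ≠ 0) :
    (∃! e : Fin m → Series (Fin (m + 1)), e = fun i => mix (shInv (d i)) e) ∧
    (∀ e : Fin m → Series (Fin (m + 1)), (e = fun i => mix (shInv (d i)) e) →
      (∀ i, e i [] ≠ 0) ∧ star d e = oneV m ∧ star e d = oneV m) ∧
    (∀ c e : Fin m → Series (Fin (m + 1)),
      (∀ i, c i [] ≠ 0) → (∀ i, e i [] ≠ 0) → ∀ i, star c e i [] ≠ 0) := by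
  have hshinv : ∀ i, sh (d i) (shInv (d i)) = one :=
    fun i => funext fun w => sh_shInv (hd i) w
  have hshinv' : ∀ i, sh (shInv (d i)) (d i) = one :=
    fun i => funext fun w => by rw [sh_comm]; exact sh_shInv (hd i) w
  have hinvnil : ∀ i, shInv (d i) [] = (d i [])⁻¹ := by
    intro i
    show (d i [])⁻¹ * ∑ k ∈ Finset.range (List.length [] + 1), shpow (sprime (d i)) k [] = _
    simp [shpow, one]
  refine ⟨?_, ?_, ?_⟩
  · -- existence and uniqueness of the fixed point
    refine ⟨efix d, ?_, ?_⟩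
    · funext i η
      exact efix_fixed d i η
    · intro g hg
      exact fixed_unique d g (efix d) (fun i => congrFun hg i)
        (fun i => funext fun η => efix_fixed d i η)
  · -- group identities
    intro e he
    have he' : ∀ i, e i = mix (shInv (d i)) e := fun i => congrFun he i
    have hpi : ∀ i, e i [] ≠ 0 := by
      intro i
      rw [he' i, mix_nil, hinvnil i]
      exact inv_ne_zero (hd i)
    refine ⟨hpi, ?_, ?_⟩
    · -- star d e = oneV m
      funext i η
      show sh (e i) (mix (d i) e) η = one η
      rw [he' i, ← mix_sh' e (shInv (d i)) (d i) η, hshinv' i]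
      exact mix_one e η
    · -- star e d = oneV m
      have key : ∀ i (η : List (Fin (m+1))),
          star e d i η = sh (d i) (mix (shInv (d i)) (star e d)) η := by
        intro i η
        show sh (d i) (mix (e i) d) η = _
        rw [he' i]
        exact sh_congr η (fun w _ => rfl) (fun w _ => mix_mix' e d (shInv (d i)) w)
      have final : ∀ i (η : List (Fin (m+1))),
          sh (d i) (mix (shInv (d i)) (oneV m)) η = one η := by
        intro i η
        rw [show mix (shInv (d i)) (oneV m) = shInv (d i) from
          funext fun w => mix_oneV _ w]
        exact sh_shInv (hd i) η
      have claim : ∀ n (η : List (Fin (m+1))), η.length ≤ n → ∀ i,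
          star e d i η = one η := by
        intro n
        induction n with
        | zero =>
          intro η hη i
          rw [key i η, ← final i η]
          exact sh_congr η (fun w _ => rfl) (fun w hw =>
            mix_congr' _ _ w (fun i' w' hw' => absurd hw' (by omega)) _)
        | succ n ih =>
          intro η hη i
          rw [key i η, ← final i η]
          exact sh_congr η (fun w _ => rfl) (fun w hw =>
            mix_congr' _ _ w (fun i' w' hw' => ih w' (by omega) i') _)
      funext i η
      exact claim η.length η le_rfl i
  · -- purely improper closed under the product
    intro c e hc he i
    show sh (e i) (mix (c i) e) [] ≠ 0
    rw [sh_nil, mix_nil]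
    exact mul_ne_zero (he i) (hc i)
end FPS
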